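/- Let $E$ and $F$ be Banach lattices with $E$ having a quasi-interior point. Then $T:E\to F$ is un-bounded (maps un-topology-bounded sets to un-topology-bounded sets) if and only if $T$ is $\sigma$-unbounded norm continuous. -/

import Mathlib

open Filter Topology

section Defs
variable {α : Type*} [Lattice α] [AddCommGroup α]

/-- Order convergence to zero of a net, witnessed by a decreasing dominating net. -/
def OConvZero {ι : Type*} [Preorder ι] (x : ι → α) : Prop :=
  ∃ (κ : Type) (_ : Nonempty κ) (_ : Preorder κ) (_ : IsDirected κ (· ≤ ·)) (z : κ → α),
    Antitone z ∧ IsGLB (Set.range z) 0 ∧ ∀ β : κ, ∃ α₀, ∀ a ≥ α₀, |x a| ≤ z β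

/-- Unbounded order convergence to zero of a net. -/
def UOConvZero {ι : Type*} [Preorder ι] (x : ι → α) : Prop :=
  ∀ u : α, 0 ≤ u → OConvZero (fun a => |x a| ⊓ u)

end Defs

/-- Unbounded norm convergence to zero of a net in a normed lattice. -/
def UNConvZero {α : Type*} [NormedAddCommGroup α] [Lattice α] {ι : Type*} [Preorder ι]
    (x : ι → α) : Prop :=
  ∀ u : α, 0 ≤ u → Tendsto (fun a => ‖|x a| ⊓ u‖) atTop (𝓝 0)

/-- The neighborhood filter of x in the un-topology, with basic neighborhoods
{y : ‖|y - x| ⊓ u‖ < ε}. -/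
def unNhds {E : Type*} [NormedAddCommGroup E] [Lattice E] [IsOrderedAddMonoid E] [HasSolidNorm E] (x : E) : Filter E :=
  ⨅ (u : E) (_ : 0 ≤ u) (ε : ℝ) (_ : 0 < ε), 𝓟 {y | ‖|y - x| ⊓ u‖ < ε}

/-- A set is un-compact if it is compact in the un-topology (filter formulation). -/
def UnCompact {E : Type*} [NormedAddCommGroup E] [Lattice E] [IsOrderedAddMonoid E] [HasSolidNorm E] (A : Set E) : Prop :=
  ∀ l : Filter E, l.NeBot → l ≤ Filter.principal A → ∃ x ∈ A, (unNhds x ⊓ l).NeBot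

/-- A set is un-bounded (topologically bounded in the un-topology):
for every sequence in A and scalars αₙ → 0, αₙxₙ is un-null. -/
def UnBounded {E : Type*} [NormedAddCommGroup E] [Lattice E] [IsOrderedAddMonoid E] [HasSolidNorm E] [Module ℝ E] (A : Set E) : Prop :=
  ∀ x : ℕ → E, (∀ n, x n ∈ A) → ∀ a : ℕ → ℝ, Tendsto a atTop (𝓝 0) →
    UNConvZero (fun n => a n • x n)

def UnContinuous {E F : Type*} [NormedAddCommGroup E] [Lattice E] [IsOrderedAddMonoid E] [HasSolidNorm E] [Module ℝ E]
    [NormedAddCommGroup F] [Lattice F] [IsOrderedAddMonoid F] [HasSolidNorm F] [Module ℝ F] (T : E →ₗ[ℝ] F) : Prop :=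
  ∀ (ι : Type) (_ : Nonempty ι) (_ : Preorder ι) (_ : IsDirected ι (· ≤ ·))
    (x : ι → E), UNConvZero x → UNConvZero (fun a => T (x a))

def SigmaUnContinuous {E F : Type*} [NormedAddCommGroup E] [Lattice E] [IsOrderedAddMonoid E] [HasSolidNorm E] [Module ℝ E]
    [NormedAddCommGroup F] [Lattice F] [IsOrderedAddMonoid F] [HasSolidNorm F] [Module ℝ F] (T : E →ₗ[ℝ] F) : Prop :=
  ∀ x : ℕ → E, UNConvZero x → UNConvZero (fun n => T (x n))




section Helpers
variable {E : Type*} [NormedAddCommGroup E] [Lattice E] [IsOrderedAddMonoid E] [HasSolidNorm E] [NormedSpace ℝ E]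

omit [NormedSpace ℝ E] in
lemma half_nonneg' {y : E} (h : 0 ≤ y + y) : 0 ≤ y := by
  have h1 : -y ≤ y := by rwa [neg_le_iff_add_nonneg]
  calc (0:E) ≤ |y| := abs_nonneg y
    _ = y := by rw [abs, sup_eq_left.2 h1]

lemma real_smul_nonneg {c : ℝ} {x : E} (hc : 0 ≤ c) (hx : 0 ≤ x) : 0 ≤ c • x := by
  have hS : IsClosed {c : ℝ | 0 ≤ c • x} := by
    have : Continuous fun c : ℝ => c • x := continuous_id.smul continuous_const
    exact isClosed_nonneg.preimage this
  have hhalf : ∀ m : ℕ, (0:E) ≤ ((1:ℝ)/2)^m • x := by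
    intro m
    induction m with
    | zero => simpa using hx
    | succ m ih =>
      apply half_nonneg'
      rw [← add_smul]
      have : ((1:ℝ)/2)^(m+1) + ((1:ℝ)/2)^(m+1) = ((1:ℝ)/2)^m := by ring
      rw [this]; exact ih
  have hdy : ∀ k m : ℕ, (0:E) ≤ ((k:ℝ) * ((1:ℝ)/2)^m) • x := by
    intro k m
    rw [mul_smul, Nat.cast_smul_eq_nsmul]
    exact nsmul_nonneg (hhalf m) k
  set d : ℕ → ℝ := fun m => (⌊2^m * c⌋₊ : ℝ) * ((1:ℝ)/2)^m with hd
  have hmem : ∀ m, d m ∈ {c : ℝ | 0 ≤ c • x} := fun m => hdy _ m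
  have htend : Tendsto d atTop (𝓝 c) := by
    have key : ∀ m : ℕ, c - ((1:ℝ)/2)^m ≤ d m ∧ d m ≤ c := by
      intro m
      have h2 : (0:ℝ) < 2^m := by positivity
      have hinv : ((1:ℝ)/2)^m * 2^m = 1 := by
        rw [one_div, inv_pow, inv_mul_cancel₀ (ne_of_gt h2)]
      have hi : (0:ℝ) < ((1:ℝ)/2)^m := by positivity
      have hfl : (⌊2^m * c⌋₊ : ℝ) ≤ 2^m * c := Nat.floor_le (by positivity)
      have hfl2 : 2^m * c < (⌊2^m * c⌋₊ : ℝ) + 1 := Nat.lt_floor_add_one _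
      constructor
      · rw [hd]; nlinarith [mul_le_mul_of_nonneg_right (le_of_lt hfl2) (le_of_lt hi)]
      · rw [hd]; nlinarith [mul_le_mul_of_nonneg_right hfl (le_of_lt hi)]
    have h1 : Tendsto (fun m : ℕ => c - ((1:ℝ)/2)^m) atTop (𝓝 c) := by
      have h0 : Tendsto (fun m : ℕ => ((1:ℝ)/2)^m) atTop (𝓝 0) :=
        tendsto_pow_atTop_nhds_zero_of_lt_one (by norm_num) (by norm_num)
      simpa using tendsto_const_nhds.sub h0
    exact tendsto_of_tendsto_of_tendsto_of_le_of_le h1 tendsto_const_nhds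
      (fun m => (key m).1) (fun m => (key m).2)
  exact hS.mem_of_tendsto htend (Filter.Eventually.of_forall hmem)

lemma smul_mono_E {c : ℝ} {x y : E} (hc : 0 ≤ c) (h : x ≤ y) : c • x ≤ c • y := by
  have := real_smul_nonneg hc (sub_nonneg.2 h)
  rwa [smul_sub, sub_nonneg] at this

lemma smul_mono_scalar {c d : ℝ} {x : E} (hc : 0 ≤ c) (hcd : c ≤ d) (hx : 0 ≤ x) :
    c • x ≤ d • x := by
  have := real_smul_nonneg (sub_nonneg.2 hcd) hx
  rwa [sub_smul, sub_nonneg] at this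

lemma abs_smul_le' (c : ℝ) (x : E) : |c • x| ≤ |c| • |x| := by
  rw [abs]
  apply sup_le
  · rcases le_or_gt 0 c with h | h
    · calc c • x ≤ c • |x| := smul_mono_E h (le_abs_self x)
        _ = |c| • |x| := by rw [abs_of_nonneg h]
    · calc c • x = (-c) • (-x) := by rw [neg_smul, smul_neg, neg_neg]
        _ ≤ (-c) • |x| := smul_mono_E (by linarith) (neg_le_abs x)
        _ = |c| • |x| := by rw [abs_of_neg h]
  · rcases le_or_gt 0 c with h | h
    · calc -(c • x) = c • (-x) := by rw [smul_neg]
        _ ≤ c • |x| := smul_mono_E h (neg_le_abs x)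
        _ = |c| • |x| := by rw [abs_of_nonneg h]
    · calc -(c • x) = (-c) • x := by rw [neg_smul]
        _ ≤ (-c) • |x| := smul_mono_E (by linarith) (le_abs_self x)
        _ = |c| • |x| := by rw [abs_of_neg h]

omit [NormedSpace ℝ E] in
lemma norm_mono_nonneg {x y : E} (hx : 0 ≤ x) (h : x ≤ y) : ‖x‖ ≤ ‖y‖ :=
  HasSolidNorm.solid (by rwa [abs_of_nonneg hx, abs_of_nonneg (hx.trans h)])

end Helpers

section Main
variable {E : Type*} [NormedAddCommGroup E] [Lattice E] [IsOrderedAddMonoid E] [HasSolidNorm E] [NormedSpace ℝ E]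

lemma inf_smul_bound {p e : E} (hp : 0 ≤ p) {r : ℝ} (hr : 1 ≤ r) :
    p ⊓ (r • e) ≤ r • (p ⊓ e) := by
  have hr0 : 0 < r := lt_of_lt_of_le one_pos hr
  have hinv1 : r⁻¹ ≤ 1 := by
    rw [inv_eq_one_div]; exact div_le_one_of_le₀ hr (by linarith)
  have h1 : r⁻¹ • (p ⊓ r • e) ≤ p ⊓ e := by
    refine le_inf ?_ ?_
    · calc r⁻¹ • (p ⊓ r • e) ≤ r⁻¹ • p := smul_mono_E (by positivity) inf_le_left
        _ ≤ (1:ℝ) • p := smul_mono_scalar (by positivity) hinv1 hp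
        _ = p := one_smul _ _
    · calc r⁻¹ • (p ⊓ r • e) ≤ r⁻¹ • (r • e) := smul_mono_E (by positivity) inf_le_right
        _ = e := by rw [smul_smul, inv_mul_cancel₀ hr0.ne', one_smul]
  calc p ⊓ (r • e) = r • (r⁻¹ • (p ⊓ r • e)) := by
        rw [smul_smul, mul_inv_cancel₀ hr0.ne', one_smul]
    _ ≤ r • (p ⊓ e) := smul_mono_E hr0.le h1

lemma unconv_of_e {e : E} (he : 0 ≤ e)
    (hqi : ∀ x : E, 0 ≤ x → Tendsto (fun n : ℕ => x ⊓ n • e) atTop (𝓝 x))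
    {x : ℕ → E} (hx : Tendsto (fun n => ‖|x n| ⊓ e‖) atTop (𝓝 0)) :
    UNConvZero x := by
  intro u hu
  rw [NormedAddCommGroup.tendsto_nhds_zero]
  intro ε hε
  have h1 : Tendsto (fun k : ℕ => ‖u - u ⊓ k • e‖) atTop (𝓝 0) := by
    have := (tendsto_const_nhds (x := u)).sub (hqi u hu)
    simpa using this.norm
  have h2 : ∀ᶠ k : ℕ in atTop, ‖u - u ⊓ k • e‖ < ε/2 := by
    apply h1.eventually_lt_const; positivity
  obtain ⟨k, hk2, hk1⟩ := (h2.and (eventually_ge_atTop 1)).exists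
  set r : ℝ := (k : ℝ) with hrdef
  have hr : 1 ≤ r := by rw [hrdef]; exact_mod_cast hk1
  have hr0 : 0 < r := lt_of_lt_of_le one_pos hr
  have hke : (k : ℕ) • e = r • e := (Nat.cast_smul_eq_nsmul ℝ k e).symm
  set w : E := u - u ⊓ k • e with hwdef
  have hw : 0 ≤ w := sub_nonneg.2 inf_le_left
  have hbound : ∀ n, ‖|x n| ⊓ u‖ ≤ r * ‖|x n| ⊓ e‖ + ‖w‖ := by
    intro n
    set p : E := |x n| with hpdef
    have hp : 0 ≤ p := abs_nonneg _
    have step1 : p ⊓ u ≤ p ⊓ (u ⊓ k • e) + w := by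
      rw [← sub_le_iff_le_add]
      refine le_inf ?_ ?_
      · exact le_trans (sub_le_self _ hw) inf_le_left
      · have : p ⊓ u - w ≤ u - w := sub_le_sub_right inf_le_right _
        simpa [hwdef] using this
    have step2 : (0:E) ≤ p ⊓ u := le_inf hp hu
    have step3 : p ⊓ (u ⊓ k • e) ≤ r • (p ⊓ e) := by
      calc p ⊓ (u ⊓ k • e) ≤ p ⊓ (k • e) := inf_le_inf_left p inf_le_right
        _ = p ⊓ (r • e) := by rw [hke]
        _ ≤ r • (p ⊓ e) := inf_smul_bound hp hr
    have step4 : (0:E) ≤ p ⊓ (u ⊓ k • e) :=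
      le_inf hp (le_inf hu (by rw [hke]; exact real_smul_nonneg hr0.le he))
    calc ‖p ⊓ u‖ ≤ ‖p ⊓ (u ⊓ k • e) + w‖ := norm_mono_nonneg step2 step1
      _ ≤ ‖p ⊓ (u ⊓ k • e)‖ + ‖w‖ := norm_add_le _ _
      _ ≤ ‖r • (p ⊓ e)‖ + ‖w‖ := by
          gcongr; exact norm_mono_nonneg step4 step3
      _ = r * ‖p ⊓ e‖ + ‖w‖ := by
          rw [norm_smul, Real.norm_eq_abs, abs_of_nonneg hr0.le]
  have h3 : ∀ᶠ n in atTop, ‖|x n| ⊓ e‖ < ε/(2*r) := by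
    apply hx.eventually_lt_const; positivity
  filter_upwards [h3] with n hn
  rw [Real.norm_eq_abs, abs_of_nonneg (norm_nonneg _)]
  have := hbound n
  have hcalc : r * ‖|x n| ⊓ e‖ < ε/2 := by
    have := (mul_lt_mul_of_pos_left hn hr0)
    calc r * ‖|x n| ⊓ e‖ < r * (ε/(2*r)) := by
          exact mul_lt_mul_of_pos_left hn hr0
      _ = ε/2 := by field_simp
  have hkw : ‖w‖ < ε/2 := hk2
  linarith

end Main

lemma exists_scalars {t : ℕ → ℝ} (ht0 : ∀ n, 0 ≤ t n) (ht : Tendsto t atTop (𝓝 0)) :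
    ∃ α : ℕ → ℝ, (∀ n, 1 ≤ α n) ∧ Tendsto α atTop atTop ∧
      Tendsto (fun n => α n * t n) atTop (𝓝 0) := by
  set s : ℕ → ℝ := fun n => t n + ((n:ℝ)+1)⁻¹ with hsdef
  have hs0 : ∀ n, 0 < s n := fun n => by
    rw [hsdef]
    have h1 : (0:ℝ) < ((n:ℝ)+1)⁻¹ := by positivity
    have := ht0 n
    simp only []
    linarith
  have hst : Tendsto s atTop (𝓝 0) := by
    have h2 : Tendsto (fun n : ℕ => ((n:ℝ)+1)⁻¹) atTop (𝓝 0) := by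
      simpa [one_div] using (tendsto_one_div_add_atTop_nhds_zero_nat : Tendsto (fun n : ℕ => 1 / ((n:ℝ) + 1)) atTop (𝓝 0))
    simpa using ht.add h2
  refine ⟨fun n => max 1 (min n (Real.sqrt (s n))⁻¹), fun n => le_max_left _ _, ?_, ?_⟩
  · rw [tendsto_atTop]
    intro b
    set B : ℝ := max b 1 with hBdef
    have hB1 : (1:ℝ) ≤ B := le_max_right _ _
    have hB0 : (0:ℝ) < B := lt_of_lt_of_le one_pos hB1
    have h3 : ∀ᶠ n in atTop, s n < (1/B)^2 := hst.eventually_lt_const (pow_pos (div_pos one_pos hB0) 2)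
    have h4 : ∀ᶠ n : ℕ in atTop, B ≤ (n:ℝ) := by
      obtain ⟨N, hN⟩ := exists_nat_ge B
      filter_upwards [eventually_ge_atTop N] with n hn
      exact hN.trans (by exact_mod_cast hn)
    filter_upwards [h3, h4] with n h3 h4
    have hsq : Real.sqrt (s n) < 1/B := by
      have := Real.sqrt_lt_sqrt (hs0 n).le h3
      rwa [Real.sqrt_sq (by positivity)] at this
    have hsqpos : 0 < Real.sqrt (s n) := Real.sqrt_pos.2 (hs0 n)
    have hinv : B ≤ (Real.sqrt (s n))⁻¹ := by
      rw [le_inv_comm₀ hB0 hsqpos]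
      calc Real.sqrt (s n) ≤ 1/B := hsq.le
        _ = B⁻¹ := one_div B
    have : B ≤ min (n:ℝ) (Real.sqrt (s n))⁻¹ := le_min h4 hinv
    calc b ≤ B := le_max_left _ _
      _ ≤ _ := this.trans (le_max_right _ _)
  · have hub : ∀ n : ℕ, max 1 (min (n:ℝ) (Real.sqrt (s n))⁻¹) * t n
        ≤ max (t n) (Real.sqrt (s n)) := by
      intro n
      have h := ht0 n
      rw [max_mul_of_nonneg _ _ (ht0 n), one_mul]
      apply max_le_max le_rfl
      have hsqpos : 0 < Real.sqrt (s n) := Real.sqrt_pos.2 (hs0 n)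
      calc min (n:ℝ) (Real.sqrt (s n))⁻¹ * t n ≤ (Real.sqrt (s n))⁻¹ * t n := by
            exact mul_le_mul_of_nonneg_right (min_le_right _ _) (ht0 n)
        _ ≤ (Real.sqrt (s n))⁻¹ * s n := by
            apply mul_le_mul_of_nonneg_left _ (by positivity)
            have : (0:ℝ) < ((n:ℝ)+1)⁻¹ := by positivity
            rw [hsdef]; simp only []; linarith
        _ = s n / Real.sqrt (s n) := by ring
        _ = Real.sqrt (s n) := Real.div_sqrt
    have hub2 : Tendsto (fun n => max (t n) (Real.sqrt (s n))) atTop (𝓝 0) := by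
      have hsq : Tendsto (fun n => Real.sqrt (s n)) atTop (𝓝 0) := by
        have := (Real.continuous_sqrt.tendsto 0).comp hst
        simpa [Function.comp_def] using this
      simpa using ht.max hsq
    have hlb : ∀ n : ℕ, 0 ≤ max 1 (min (n:ℝ) (Real.sqrt (s n))⁻¹) * t n := fun n =>
      mul_nonneg (le_trans zero_le_one (le_max_left _ _)) (ht0 n)
    exact tendsto_of_tendsto_of_tendsto_of_le_of_le tendsto_const_nhds hub2 hlb hub

/-- if E has a quasi-interior point, an operator between Banach
lattices is un-bounded iff it is σ-un-continuous. -/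
theorem unBounded_iff_sigmaUnContinuous
    {E F : Type*} [NormedAddCommGroup E] [Lattice E] [IsOrderedAddMonoid E] [HasSolidNorm E] [NormedSpace ℝ E] [CompleteSpace E]
    [NormedAddCommGroup F] [Lattice F] [IsOrderedAddMonoid F] [HasSolidNorm F] [NormedSpace ℝ F] [CompleteSpace F]
    (e : E) (he : 0 ≤ e)
    (hqi : ∀ x : E, 0 ≤ x → Tendsto (fun n : ℕ => x ⊓ n • e) atTop (𝓝 x))
    (T : E →ₗ[ℝ] F) :
    (∀ A : Set E, UnBounded A → UnBounded (T '' A)) ↔ SigmaUnContinuous T := by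
  constructor
  · intro H x hx
    set t : ℕ → ℝ := fun n => ‖|x n| ⊓ e‖ with htdef
    have ht0 : ∀ n, 0 ≤ t n := fun n => norm_nonneg _
    have ht : Tendsto t atTop (𝓝 0) := hx e he
    obtain ⟨α, hα1, hαtop, hαt⟩ := exists_scalars ht0 ht
    set z : ℕ → E := fun n => α n • x n with hzdef
    have hz : UNConvZero z := by
      apply unconv_of_e he hqi
      apply tendsto_of_tendsto_of_tendsto_of_le_of_le tendsto_const_nhds hαt
        (fun n => norm_nonneg _)
      intro n
      have habs : |α n • x n| ≤ α n • |x n| := by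
        have h := abs_smul_le' (α n) (x n)
        rwa [abs_of_nonneg (le_trans zero_le_one (hα1 n))] at h
      have h1 : |z n| ⊓ e ≤ α n • (|x n| ⊓ e) := by
        calc |z n| ⊓ e ≤ (α n • |x n|) ⊓ e := inf_le_inf_right e habs
          _ = e ⊓ (α n • |x n|) := inf_comm _ _
          _ ≤ α n • (e ⊓ |x n|) := inf_smul_bound he (hα1 n)
          _ = α n • (|x n| ⊓ e) := by rw [inf_comm]
      calc ‖|z n| ⊓ e‖ ≤ ‖α n • (|x n| ⊓ e)‖ :=
            norm_mono_nonneg (le_inf (abs_nonneg _) he) h1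
        _ = α n * t n := by
            rw [norm_smul, Real.norm_eq_abs,
              abs_of_nonneg (le_trans zero_le_one (hα1 n))]
    have hs : Tendsto (fun n => ‖|z n| ⊓ e‖) atTop (𝓝 0) := hz e he
    have hA : UnBounded (Set.range z) := by
      intro y hy a ha
      choose φ hφ using hy
      apply unconv_of_e he hqi
      rw [NormedAddCommGroup.tendsto_nhds_zero]
      intro ε hε
      obtain ⟨N, hN⟩ := eventually_atTop.1 (hs.eventually_lt_const hε)
      set M : ℝ := ∑ i ∈ Finset.range N, ‖z i‖ with hM
      have hM0 : (0:ℝ) ≤ M := Finset.sum_nonneg (fun _ _ => norm_nonneg _)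
      have hMi : ∀ i < N, ‖z i‖ ≤ M := fun i hi =>
        Finset.single_le_sum (f := fun i => ‖z i‖) (fun _ _ => norm_nonneg _)
          (Finset.mem_range.2 hi)
      have haabs : Tendsto (fun m => |a m|) atTop (𝓝 0) := by simpa using ha.abs
      have ha1 : ∀ᶠ m in atTop, |a m| < min 1 (ε/(M+1)) :=
        haabs.eventually_lt_const (lt_min one_pos (by positivity))
      filter_upwards [ha1] with m ham
      rw [Real.norm_eq_abs, abs_of_nonneg (norm_nonneg _)]
      have ham1 : |a m| ≤ 1 := le_of_lt (lt_of_lt_of_le ham (min_le_left _ _))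
      by_cases hc : N ≤ φ m
      · have hyz : |a m • y m| ≤ |y m| := by
          calc |a m • y m| ≤ |a m| • |y m| := abs_smul_le' _ _
            _ ≤ (1:ℝ) • |y m| := smul_mono_scalar (abs_nonneg _) ham1 (abs_nonneg _)
            _ = |y m| := one_smul _ _
        calc ‖|a m • y m| ⊓ e‖ ≤ ‖|y m| ⊓ e‖ :=
              norm_mono_nonneg (le_inf (abs_nonneg _) he) (inf_le_inf_right e hyz)
          _ = ‖|z (φ m)| ⊓ e‖ := by rw [hφ m]
          _ < ε := hN (φ m) hc
      · have h1 : ‖|a m • y m| ⊓ e‖ ≤ ‖a m • y m‖ := by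
          have h := norm_mono_nonneg (le_inf (abs_nonneg _) he)
            (inf_le_left : |a m • y m| ⊓ e ≤ |a m • y m|)
          rwa [norm_abs_eq_norm] at h
        have h2 : ‖a m • y m‖ = |a m| * ‖y m‖ := by rw [norm_smul, Real.norm_eq_abs]
        have h3 : ‖y m‖ ≤ M := by rw [← hφ m]; exact hMi _ (not_le.1 hc)
        have h4 : |a m| * ‖y m‖ < ε := by
          have hlt : |a m| < ε/(M+1) := lt_of_lt_of_le ham (min_le_right _ _)
          calc |a m| * ‖y m‖ ≤ |a m| * (M+1) := by
                apply mul_le_mul_of_nonneg_left _ (abs_nonneg _)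
                linarith
            _ < (ε/(M+1)) * (M+1) := by
                apply mul_lt_mul_of_pos_right hlt (by positivity)
            _ = ε := by field_simp
        calc ‖|a m • y m| ⊓ e‖ ≤ |a m| * ‖y m‖ := by rw [← h2]; exact h1
          _ < ε := h4
    have hTA := H _ hA
    have hmem : ∀ n, T (z n) ∈ T '' Set.range z := fun n => ⟨z n, ⟨n, rfl⟩, rfl⟩
    have hainv : Tendsto (fun n => (α n)⁻¹) atTop (𝓝 0) :=
      tendsto_inv_atTop_zero.comp hαtop
    have hfin := hTA (fun n => T (z n)) hmem (fun n => (α n)⁻¹) hainv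
    have heq : (fun n => (α n)⁻¹ • T (z n)) = fun n => T (x n) := by
      funext n
      have h0 : α n ≠ 0 := by have := hα1 n; linarith
      rw [hzdef]
      simp only []
      rw [map_smul, smul_smul, inv_mul_cancel₀ h0, one_smul]
    rwa [heq] at hfin
  · intro H A hA y hy a ha
    choose x hxA hTx using hy
    have h1 := hA x hxA a ha
    have h2 := H _ h1
    have heq : (fun n => T (a n • x n)) = fun n => a n • y n := by
      funext n
      rw [map_smul, hTx n]
    rwa [heq] at h2
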